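/- arXiv:0910.0936 — 2 statements merged into one kernel-verified Lean document; each statement's English description precedes it below -/
import Mathlib

section
/- Let h_n(f) = (n/2) Σ_{l∈𝓝} w_{n,l} θ_l² with extremal weights w_{n,l} = v_{l,n}²/u_n, where {v_{l,n}} is the extremal sequence of the extremal problem with b = B = 1 and u_n its value. Then inf_{f∈𝓕(r_n)} h_n(f) = u_n. (Lemma 8.2.) -/
open scoped BigOperators

noncomputable section

private lemma stmt16_alg (u m : ℝ) (hu : u ≠ 0) (hm : m ≠ 0) :
    (m / 2) * (2 * u ^ 2 / (u * m)) = u := by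
  field_simp

/- STATEMENT 16 (Lemma 8.2): with the extremal weights w_{n,l} = v_{l,n}²/u_n,
where {v_{l,n}} is the extremal sequence of the extremal problem
u_n² = inf{½Σv⁴ : Σv² ≥ n r_n², Σc²v² ≤ n} (so v_{l,n}² = z₀²(1−(c_l/C)²)₊
with Σ v² = n r_n², Σ c²v² = n, and u_n² = ½ Σ v_{l,n}⁴), one has
inf_{f∈𝓕(r_n)} h_n(f) = u_n for h_n(f) = (n/2) Σ w_{n,l} θ_l². -/
theorem stmt16 {ι : Type*} [Countable ι] (c : ι → ℝ) (hc : ∀ l, 0 ≤ c l)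
    (hA1 : ∀ C : ℝ, 0 < C → {l | c l < C}.Finite)
    (n : ℕ) (r : ℝ) (hr : 0 < r)
    (z₀ C : ℝ) (hz₀ : 0 < z₀) (hC : 0 < C)
    (v : ι → ℝ) (hvval : ∀ l, (v l) ^ 2 = z₀ ^ 2 * max (1 - (c l / C) ^ 2) 0)
    (hcon1 : ∑' l, (v l) ^ 2 = (n : ℝ) * r ^ 2)
    (hcon2 : ∑' l, (c l) ^ 2 * (v l) ^ 2 = (n : ℝ))
    (u : ℝ) (hu : 0 < u) (huval : u ^ 2 = (1 / 2 : ℝ) * ∑' l, (v l) ^ 4)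
    (w : ι → ℝ) (hw : ∀ l, w l = (v l) ^ 2 / u) :
    sInf {x : ℝ | ∃ θ : ι → ℝ,
        Summable (fun l => (θ l) ^ 2) ∧
        Summable (fun l => (c l) ^ 2 * (θ l) ^ 2) ∧
        ∑' l, (c l) ^ 2 * (θ l) ^ 2 ≤ 1 ∧
        r ^ 2 ≤ ∑' l, (θ l) ^ 2 ∧
        x = ((n : ℝ) / 2) * ∑' l, w l * (θ l) ^ 2} = u := by
  have hCne : C ≠ 0 := ne_of_gt hC
  set s : Finset ι := (hA1 C hC).toFinset with hs
  -- v vanishes off s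
  have hvz : ∀ l, l ∉ s → v l ^ 2 = 0 := by
    intro l hl
    have hcl : C ≤ c l := by
      by_contra h
      exact hl (by simp [hs, lt_of_not_ge h])
    have h1 : (1 : ℝ) ≤ (c l / C) ^ 2 := by
      have h2 : (1 : ℝ) ≤ c l / C := (one_le_div hC).2 hcl
      nlinarith
    rw [hvval, max_eq_right (by linarith)]
    ring
  have sv2 : Summable (fun l => v l ^ 2) := summable_of_ne_finset_zero hvz
  have sv4 : Summable (fun l => v l ^ 4) := by
    refine summable_of_ne_finset_zero (s := s) ?_
    intro l hl
    have h0 := hvz l hl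
    nlinarith [h0]
  have sc2v2 : Summable (fun l => c l ^ 2 * v l ^ 2) := by
    refine summable_of_ne_finset_zero (s := s) ?_
    intro l hl
    rw [hvz l hl]; ring
  -- n > 0
  have hnpos : (0 : ℝ) < (n : ℝ) := by
    rcases eq_or_lt_of_le (Nat.cast_nonneg n : (0:ℝ) ≤ n) with h | h
    · exfalso
      have hz : ∑' l, v l ^ 2 = 0 := by rw [hcon1, ← h]; ring
      have hall : ∀ l, v l ^ 2 = 0 := by
        intro l
        have hle : v l ^ 2 ≤ ∑' l, v l ^ 2 :=
          Summable.le_tsum sv2 l (fun j _ => sq_nonneg _)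
        nlinarith [sq_nonneg (v l)]
      have h4 : ∀ l, v l ^ 4 = 0 := by
        intro l; have := hall l; nlinarith
      have : (∑' l, v l ^ 4) = 0 := by simp [h4]
      rw [this] at huval
      nlinarith
    · exact h
  -- pointwise identity: v⁴ = z₀²(v² − c²v²/C²)
  have peq : ∀ l, v l ^ 4 = z₀ ^ 2 * (v l ^ 2 - c l ^ 2 * v l ^ 2 / C ^ 2) := by
    intro l
    by_cases hcl : c l < C
    · have hlt : (c l / C) ^ 2 < 1 := by
        have h0 : 0 ≤ c l / C := div_nonneg (hc l) hC.le
        have h1 : c l / C < 1 := (div_lt_one hC).2 hcl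
        nlinarith
      have h2 : v l ^ 2 = z₀ ^ 2 * (1 - (c l / C) ^ 2) := by
        rw [hvval, max_eq_left (by linarith)]
      have h3 : v l ^ 4 = v l ^ 2 * v l ^ 2 := by ring
      rw [h3, h2]
      field_simp
    · have h0 : v l ^ 2 = 0 := by
        have hcl' : C ≤ c l := le_of_not_gt hcl
        have h1 : (1 : ℝ) ≤ (c l / C) ^ 2 := by
          have h2 : (1 : ℝ) ≤ c l / C := (one_le_div hC).2 hcl'
          nlinarith
        rw [hvval, max_eq_right (by linarith)]; ring
      have : v l ^ 4 = 0 := by nlinarith [h0]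
      rw [this, h0]; ring
  -- sum of v⁴
  have key : ∑' l, v l ^ 4 = z₀ ^ 2 * ((n : ℝ) * r ^ 2 - (n : ℝ) / C ^ 2) := by
    calc ∑' l, v l ^ 4
        = ∑' l, z₀ ^ 2 * (v l ^ 2 - c l ^ 2 * v l ^ 2 / C ^ 2) := tsum_congr peq
      _ = z₀ ^ 2 * ∑' l, (v l ^ 2 - c l ^ 2 * v l ^ 2 / C ^ 2) := tsum_mul_left
      _ = z₀ ^ 2 * ((∑' l, v l ^ 2) - ∑' l, c l ^ 2 * v l ^ 2 / C ^ 2) := by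
          rw [Summable.tsum_sub sv2 (sc2v2.div_const _)]
      _ = z₀ ^ 2 * ((n : ℝ) * r ^ 2 - (n : ℝ) / C ^ 2) := by
          rw [tsum_div_const, hcon1, hcon2]
  have key2 : ∑' l, v l ^ 4 = 2 * u ^ 2 := by linarith
  -- lower bound
  have lb : ∀ x ∈ {x : ℝ | ∃ θ : ι → ℝ,
        Summable (fun l => (θ l) ^ 2) ∧
        Summable (fun l => (c l) ^ 2 * (θ l) ^ 2) ∧
        ∑' l, (c l) ^ 2 * (θ l) ^ 2 ≤ 1 ∧
        r ^ 2 ≤ ∑' l, (θ l) ^ 2 ∧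
        x = ((n : ℝ) / 2) * ∑' l, w l * (θ l) ^ 2}, u ≤ x := by
    rintro x ⟨θ, sθ, scθ, hc1, hr1, hx⟩
    have sv2θ : Summable (fun l => v l ^ 2 * θ l ^ 2) := by
      refine summable_of_ne_finset_zero (s := s) ?_
      intro l hl; rw [hvz l hl]; ring
    have pw : ∀ l, z₀ ^ 2 * (θ l ^ 2 - c l ^ 2 * θ l ^ 2 / C ^ 2)
        ≤ v l ^ 2 * θ l ^ 2 := by
      intro l
      have h1 : z₀ ^ 2 * (1 - (c l / C) ^ 2) ≤ v l ^ 2 := by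
        rw [hvval]
        exact mul_le_mul_of_nonneg_left (le_max_left _ _) (sq_nonneg _)
      have h2 : z₀ ^ 2 * (θ l ^ 2 - c l ^ 2 * θ l ^ 2 / C ^ 2)
          = (z₀ ^ 2 * (1 - (c l / C) ^ 2)) * θ l ^ 2 := by
        field_simp
      rw [h2]
      exact mul_le_mul_of_nonneg_right h1 (sq_nonneg _)
    have slhs : Summable (fun l => z₀ ^ 2 * (θ l ^ 2 - c l ^ 2 * θ l ^ 2 / C ^ 2)) :=
      ((sθ.sub (scθ.div_const _)).mul_left _)
    have hsum_le : z₀ ^ 2 * ((∑' l, θ l ^ 2) - (∑' l, c l ^ 2 * θ l ^ 2) / C ^ 2)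
        ≤ ∑' l, v l ^ 2 * θ l ^ 2 := by
      have := Summable.tsum_le_tsum pw slhs sv2θ
      calc z₀ ^ 2 * ((∑' l, θ l ^ 2) - (∑' l, c l ^ 2 * θ l ^ 2) / C ^ 2)
          = ∑' l, z₀ ^ 2 * (θ l ^ 2 - c l ^ 2 * θ l ^ 2 / C ^ 2) := by
            rw [tsum_mul_left, Summable.tsum_sub sθ (scθ.div_const _), tsum_div_const]
        _ ≤ ∑' l, v l ^ 2 * θ l ^ 2 := this
    have hlow : z₀ ^ 2 * (r ^ 2 - 1 / C ^ 2) ≤ ∑' l, v l ^ 2 * θ l ^ 2 := by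
      have hC2 : (0:ℝ) < C ^ 2 := by positivity
      have : z₀ ^ 2 * (r ^ 2 - 1 / C ^ 2)
          ≤ z₀ ^ 2 * ((∑' l, θ l ^ 2) - (∑' l, c l ^ 2 * θ l ^ 2) / C ^ 2) := by
        have h1 : (∑' l, c l ^ 2 * θ l ^ 2) / C ^ 2 ≤ 1 / C ^ 2 := by
          gcongr
        nlinarith [sq_nonneg z₀]
      linarith
    -- rewrite x
    have hxval : x = ((n : ℝ) / (2 * u)) * ∑' l, v l ^ 2 * θ l ^ 2 := by
      rw [hx]
      have : ∀ l, w l * θ l ^ 2 = (v l ^ 2 * θ l ^ 2) / u := by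
        intro l; rw [hw]; ring
      rw [tsum_congr this, tsum_div_const]
      ring
    have hkey3 : (n : ℝ) * (z₀ ^ 2 * (r ^ 2 - 1 / C ^ 2)) = 2 * u ^ 2 := by
      rw [← key2, key]
      ring
    have hT : 2 * u ^ 2 ≤ (n : ℝ) * ∑' l, v l ^ 2 * θ l ^ 2 := by
      calc 2 * u ^ 2 = (n : ℝ) * (z₀ ^ 2 * (r ^ 2 - 1 / C ^ 2)) := hkey3.symm
        _ ≤ (n : ℝ) * ∑' l, v l ^ 2 * θ l ^ 2 :=
            mul_le_mul_of_nonneg_left hlow hnpos.le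
    rw [hxval, div_mul_eq_mul_div, le_div_iff₀ (by positivity)]
    calc u * (2 * u) = 2 * u ^ 2 := by ring
      _ ≤ (n : ℝ) * ∑' l, v l ^ 2 * θ l ^ 2 := hT
  -- membership
  have hsqn : Real.sqrt n ^ 2 = (n : ℝ) := Real.sq_sqrt hnpos.le
  have mem : u ∈ {x : ℝ | ∃ θ : ι → ℝ,
        Summable (fun l => (θ l) ^ 2) ∧
        Summable (fun l => (c l) ^ 2 * (θ l) ^ 2) ∧
        ∑' l, (c l) ^ 2 * (θ l) ^ 2 ≤ 1 ∧
        r ^ 2 ≤ ∑' l, (θ l) ^ 2 ∧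
        x = ((n : ℝ) / 2) * ∑' l, w l * (θ l) ^ 2} := by
    refine ⟨fun l => v l / Real.sqrt n, ?_, ?_, ?_, ?_, ?_⟩
    · have : ∀ l, (v l / Real.sqrt n) ^ 2 = v l ^ 2 / (n : ℝ) := by
        intro l; rw [div_pow, hsqn]
      simpa [this] using sv2.div_const (n : ℝ)
    · have : ∀ l, c l ^ 2 * (v l / Real.sqrt n) ^ 2 = (c l ^ 2 * v l ^ 2) / (n : ℝ) := by
        intro l; rw [div_pow, hsqn]; ring
      simpa [this] using sc2v2.div_const (n : ℝ)
    · have h1 : ∀ l, c l ^ 2 * (v l / Real.sqrt n) ^ 2 = (c l ^ 2 * v l ^ 2) / (n : ℝ) := by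
        intro l; rw [div_pow, hsqn]; ring
      rw [tsum_congr h1, tsum_div_const, hcon2]
      rw [div_self (ne_of_gt hnpos)]
    · have h1 : ∀ l, (v l / Real.sqrt n) ^ 2 = v l ^ 2 / (n : ℝ) := by
        intro l; rw [div_pow, hsqn]
      rw [tsum_congr h1, tsum_div_const, hcon1,
        mul_comm ((n : ℝ)) (r ^ 2), mul_div_assoc, div_self (ne_of_gt hnpos), mul_one]
    · have h1 : ∀ l, w l * (v l / Real.sqrt n) ^ 2 = v l ^ 4 / (u * (n : ℝ)) := by
        intro l
        rw [hw, div_pow, hsqn, div_mul_div_comm, ← pow_add]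
      rw [tsum_congr h1, tsum_div_const, key2]
      exact (stmt16_alg u (n : ℝ) (ne_of_gt hu) (ne_of_gt hnpos)).symm
  exact IsLeast.csInf_eq ⟨mem, lb⟩
end
end

section
/- Let σ > 1/2 and s > 1/2, and for l ∈ ℤ^∞_* with l ≠ 0 set c_l = Π_{j∈ℕ: l_j≠0} j^s |2π l_j|^σ, c_0 = 1, and J(l) = #{j : l_j ≠ 0}. Then Σ_{l∈ℤ^∞_*} 2^{J(l)} c_l^{-2} = Π_{j∈ℕ} (1 + 2 j^{-2s} Σ_{k∈ℤ∖{0}} |2πk|^{-2σ}) < ∞. (Summability verification for the Sloan–Woźniakowski norm, Section 6.5.) -/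
open scoped BigOperators

noncomputable section

/-- J(l) = #{j : l_j ≠ 0}, for l ∈ ℤ^∞_* (finitely supported integer
sequences; the index j ∈ ℕ = {1,2,…} is encoded as j+1 for j : ℕ). -/
def Jnum (l : ℕ →₀ ℤ) : ℕ := l.support.card

/-- The Sloan–Woźniakowski coefficients c_l = Π_{j : l_j ≠ 0} j^s |2π l_j|^σ
(with c_0 = 1 as an empty product); the natural index j ∈ {1,2,…} corresponds
to j+1 for j : ℕ. -/
def cSW (σ s : ℝ) (l : ℕ →₀ ℤ) : ℝ :=
  ∏ j ∈ l.support, (((j : ℝ) + 1) ^ s * |2 * Real.pi * (l j : ℝ)| ^ σ)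

namespace Stmt19Aux

/-- T = Σ_{k ≠ 0} |2πk|^{-2σ}. -/
def T (σ : ℝ) : ℝ := ∑' k : {k : ℤ // k ≠ 0}, |2 * Real.pi * (k.1 : ℝ)| ^ (-(2 * σ))

/-- The factor of the Euler product. -/
def a (σ s : ℝ) (j : ℕ) : ℝ := 1 + 2 * ((j : ℝ) + 1) ^ (-(2 * s)) * T σ

/-- Local factor function. -/
def g (σ s : ℝ) (j : ℕ) (k : ℤ) : ℝ :=
  if k = 0 then 1 else 2 * ((j : ℝ) + 1) ^ (-(2 * s)) * |2 * Real.pi * (k : ℝ)| ^ (-(2 * σ))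

/-- The global summand as a product of local factors. -/
def F (σ s : ℝ) (l : ℕ →₀ ℤ) : ℝ := ∏ j ∈ l.support, g σ s j (l j)

lemma g_nonneg (σ s : ℝ) (j : ℕ) (k : ℤ) : 0 ≤ g σ s j k := by
  unfold g; split
  · norm_num
  · positivity

lemma F_nonneg (σ s : ℝ) (l : ℕ →₀ ℤ) : 0 ≤ F σ s l :=
  Finset.prod_nonneg fun j _ => g_nonneg σ s j (l j)

lemma summable_T (σ : ℝ) (hσ : 1 / 2 < σ) :
    Summable fun k : {k : ℤ // k ≠ 0} => |2 * Real.pi * (k.1 : ℝ)| ^ (-(2 * σ)) := by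
  have h : Summable fun k : ℤ => |(k : ℝ)| ^ (-(2 * σ)) :=
    Real.summable_abs_int_rpow (by linarith)
  have key : ∀ k : ℤ, |2 * Real.pi * (k : ℝ)| ^ (-(2 * σ))
      = |2 * Real.pi| ^ (-(2 * σ)) * |(k : ℝ)| ^ (-(2 * σ)) := by
    intro k; rw [abs_mul, Real.mul_rpow (abs_nonneg _) (abs_nonneg _)]
  exact (((h.mul_left _).congr fun k => (key k).symm).subtype _)

lemma T_nonneg (σ : ℝ) : 0 ≤ T σ :=
  tsum_nonneg fun k => Real.rpow_nonneg (abs_nonneg _) _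

lemma hasSum_g (σ s : ℝ) (hσ : 1 / 2 < σ) (j : ℕ) :
    HasSum (g σ s j) (a σ s j) := by
  set C : ℝ := 2 * ((j : ℝ) + 1) ^ (-(2 * s)) with hC
  have h0 : HasSum (fun k : ℤ => if k = 0 then (1 : ℝ) else 0) 1 := hasSum_ite_eq 0 1
  have h1' : HasSum (fun k : {k : ℤ // k ≠ 0} => C * |2 * Real.pi * (k.1 : ℝ)| ^ (-(2 * σ)))
      (C * T σ) := ((summable_T σ hσ).hasSum.mul_left C)
  have h1 : HasSum (fun k : ℤ => if k = 0 then (0:ℝ)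
      else C * |2 * Real.pi * (k : ℝ)| ^ (-(2 * σ))) (C * T σ) := by
    refine (hasSum_subtype_iff_of_support_subset (s := {k : ℤ | k ≠ 0}) ?_).1 ?_
    · intro k hk
      simp only [Function.mem_support, Set.mem_setOf_eq] at hk ⊢
      intro h; exact hk (by simp [h])
    · refine HasSum.congr_fun h1' ?_
      intro k
      simp only [Function.comp_apply]
      exact if_neg k.2
  have h2 := h0.add h1
  have heq2 : (fun k : ℤ => (if k = 0 then (1:ℝ) else 0) +
      if k = 0 then (0:ℝ) else C * |2 * Real.pi * (k : ℝ)| ^ (-(2 * σ))) = g σ s j := by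
    funext k
    unfold g
    by_cases hk : k = 0 <;> simp [hk, hC]
  rw [heq2] at h2
  exact h2

/-- F as rewriting of the explicit summand. -/
lemma F_eq (σ s : ℝ) (l : ℕ →₀ ℤ) :
    (2 : ℝ) ^ (Jnum l) * ((cSW σ s l) ^ 2)⁻¹ = F σ s l := by
  unfold Jnum cSW F
  have step : ∀ j ∈ l.support, g σ s j (l j)
      = 2 * (((((j : ℝ) + 1) ^ s * |2 * Real.pi * (l j : ℝ)| ^ σ)) ^ 2)⁻¹ := by
    intro j hj
    have hj' : l j ≠ 0 := Finsupp.mem_support_iff.1 hj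
    have hx : (0:ℝ) < (j : ℝ) + 1 := by positivity
    have hy : (0:ℝ) < |2 * Real.pi * (l j : ℝ)| :=
      abs_pos.2 (mul_ne_zero (by positivity) (Int.cast_ne_zero.2 hj'))
    rw [g, if_neg hj', mul_pow, mul_inv,
      ← Real.rpow_natCast (((j : ℝ) + 1) ^ s) 2, ← Real.rpow_natCast (_ ^ σ) 2,
      ← Real.rpow_mul hx.le, ← Real.rpow_mul hy.le,
      ← Real.rpow_neg hx.le, ← Real.rpow_neg hy.le]
    norm_num [mul_comm, mul_assoc]
  rw [Finset.prod_congr rfl step]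
  simp [Finset.prod_mul_distrib, Finset.prod_inv_distrib, Finset.prod_pow, Finset.prod_const]

/-- The equivalence used in the induction step. -/
def updEquiv (j : ℕ) (A : Finset ℕ) (hj : j ∉ A) :
    ℤ × {l : ℕ →₀ ℤ // l.support ⊆ A} ≃ {l : ℕ →₀ ℤ // l.support ⊆ insert j A} where
  toFun p := ⟨p.2.1.update j p.1,
    (Finsupp.support_update_subset _ _).trans (Finset.insert_subset_insert _ p.2.2)⟩
  invFun m := (m.1 j, ⟨m.1.erase j, by
    rw [Finsupp.support_erase]
    refine (Finset.erase_subset_erase j m.2).trans ?_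
    rw [Finset.erase_insert hj]⟩)
  left_inv p := by
    have hjA : j ∉ p.2.1.support := fun h => hj (p.2.2 h)
    have h1 : (p.2.1.update j p.1) j = p.1 := by
      simp [Finsupp.coe_update]
    have h2 : (p.2.1.update j p.1).erase j = p.2.1 := by
      rw [Finsupp.erase_update_eq_erase, Finsupp.erase_of_notMem_support hjA]
    exact Prod.ext h1 (Subtype.ext h2)
  right_inv m := by
    apply Subtype.ext
    simp only
    rw [Finsupp.update_erase_eq_update, Finsupp.update_self]

set_option maxHeartbeats 1000000 in
lemma key (σ s : ℝ) (hσ : 1 / 2 < σ) (A : Finset ℕ) :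
    HasSum (fun l : {l : ℕ →₀ ℤ // l.support ⊆ A} => F σ s l.1) (∏ j ∈ A, a σ s j) := by
  classical
  induction A using Finset.induction_on with
  | empty =>
      have hb : ({⟨0, by simp⟩} : Set {l : ℕ →₀ ℤ // l.support ⊆ (∅ : Finset ℕ)}) = Set.univ := by
        ext l
        simp only [Set.mem_singleton_iff, Set.mem_univ, iff_true]
        ext1
        have := l.2
        simp only [Finset.subset_empty, Finsupp.support_eq_empty] at this
        simp [this]
      rw [Finset.prod_empty]
      have := hasSum_single (f := fun l : {l : ℕ →₀ ℤ // l.support ⊆ (∅ : Finset ℕ)} => F σ s l.1)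
        (⟨0, by simp⟩ : {l : ℕ →₀ ℤ // l.support ⊆ (∅ : Finset ℕ)}) ?_
      · simpa [F] using this
      · intro b hb'
        exfalso
        apply hb'
        ext1
        have := b.2
        simp only [Finset.subset_empty, Finsupp.support_eq_empty] at this
        simp [this]
  | @insert j A hj ih =>
      have hjA : ∀ l : {l : ℕ →₀ ℤ // l.support ⊆ A}, j ∉ l.1.support :=
        fun l h => hj (l.2 h)
      let e := updEquiv j A hj
      have hmul : HasSum (fun p : ℤ × {l : ℕ →₀ ℤ // l.support ⊆ A} =>
          g σ s j p.1 * F σ s p.2.1) (a σ s j * ∏ i ∈ A, a σ s i) := by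
        have hsum : Summable (fun p : ℤ × {l : ℕ →₀ ℤ // l.support ⊆ A} =>
            g σ s j p.1 * F σ s p.2.1) :=
          (hasSum_g σ s hσ j).summable.mul_of_nonneg ih.summable
            (fun k => g_nonneg σ s j k) (fun l => F_nonneg σ s l.1)
        exact (hasSum_g σ s hσ j).mul ih hsum
      rw [Finset.prod_insert hj]
      refine (e.hasSum_iff.1 ?_)
      have comp_eq : ∀ p : ℤ × {l : ℕ →₀ ℤ // l.support ⊆ A},
          F σ s ((e p).1) = g σ s j p.1 * F σ s p.2.1 := by
        rintro ⟨k, l, hl⟩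
        show F σ s (Finsupp.update l j k) = g σ s j k * F σ s l
        have hjl : j ∉ l.support := fun h => hj (hl h)
        by_cases hk : k = 0
        · subst hk
          rw [← Finsupp.erase_eq_update_zero, Finsupp.erase_of_notMem_support hjl]
          simp [g]
        · unfold F
          rw [Finsupp.support_update_ne_zero _ _ hk, Finset.prod_insert hjl]
          congr 1
          · simp [Finsupp.coe_update]
          · refine Finset.prod_congr rfl fun i hi => ?_
            have : i ≠ j := fun h => hjl (h ▸ hi)
            simp [Finsupp.coe_update, Function.update_of_ne this]
      have hcomp : ((fun l : {l : ℕ →₀ ℤ // l.support ⊆ insert j A} => F σ s l.1) ∘ e)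
          = fun p => g σ s j p.1 * F σ s p.2.1 := funext fun p => comp_eq p
      rw [hcomp]
      exact hmul


lemma a_nonneg_aux (σ s : ℝ) (j : ℕ) : 0 ≤ 2 * ((j : ℝ) + 1) ^ (-(2 * s)) * T σ :=
  mul_nonneg (by positivity) (T_nonneg σ)

lemma one_le_a (σ s : ℝ) (j : ℕ) : 1 ≤ a σ s j := by
  have := a_nonneg_aux σ s j
  unfold a; linarith

lemma summable_b (σ s : ℝ) (hs : 1 / 2 < s) :
    Summable (fun j : ℕ => 2 * ((j : ℝ) + 1) ^ (-(2 * s)) * T σ) := by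
  have h0 : Summable (fun n : ℕ => (n : ℝ) ^ (-(2 * s))) :=
    (Real.summable_nat_rpow (p := -(2 * s))).2 (by linarith)
  have h : Summable (fun j : ℕ => ((j : ℝ) + 1) ^ (-(2 * s))) := by
    refine (h0.comp_injective Nat.succ_injective).congr fun j => ?_
    simp [Function.comp, Nat.succ_eq_add_one]
  exact (h.mul_left 2).mul_right (T σ)

/-- Uniform bound on the partial Euler products. -/
lemma prod_a_le (σ s : ℝ) (hs : 1 / 2 < s) (A : Finset ℕ) :
    ∏ j ∈ A, a σ s j ≤ Real.exp (∑' j : ℕ, 2 * ((j : ℝ) + 1) ^ (-(2 * s)) * T σ) := by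
  calc ∏ j ∈ A, a σ s j
      ≤ ∏ j ∈ A, Real.exp (2 * ((j : ℝ) + 1) ^ (-(2 * s)) * T σ) := by
        refine Finset.prod_le_prod (fun j _ => ?_) (fun j _ => ?_)
        · have := a_nonneg_aux σ s j
          unfold a; linarith
        · unfold a; rw [add_comm]; exact Real.add_one_le_exp _
    _ = Real.exp (∑ j ∈ A, 2 * ((j : ℝ) + 1) ^ (-(2 * s)) * T σ) := (Real.exp_sum A _).symm
    _ ≤ _ := Real.exp_le_exp.2 (Summable.sum_le_tsum A (fun j _ => a_nonneg_aux σ s j) (summable_b σ s hs))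

lemma hasSum_indicator (σ s : ℝ) (hσ : 1 / 2 < σ) (A : Finset ℕ) :
    HasSum (Set.indicator {l : ℕ →₀ ℤ | l.support ⊆ A} (F σ s)) (∏ j ∈ A, a σ s j) :=
  hasSum_subtype_iff_indicator.1 (key σ s hσ A)

lemma sum_le_prod (σ s : ℝ) (hσ : 1 / 2 < σ) (u : Finset (ℕ →₀ ℤ)) :
    ∑ l ∈ u, F σ s l ≤ ∏ j ∈ u.sup Finsupp.support, a σ s j := by
  set A := u.sup Finsupp.support with hA
  have hind := hasSum_indicator σ s hσ A
  calc ∑ l ∈ u, F σ s l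
      = ∑ l ∈ u, Set.indicator {l : ℕ →₀ ℤ | l.support ⊆ A} (F σ s) l :=
        Finset.sum_congr rfl fun l hl =>
          (Set.indicator_of_mem (show l ∈ {l : ℕ →₀ ℤ | l.support ⊆ A} from Finset.le_sup (f := Finsupp.support) hl) _).symm
    _ ≤ ∑' l, Set.indicator {l : ℕ →₀ ℤ | l.support ⊆ A} (F σ s) l :=
        Summable.sum_le_tsum u (fun l _ => Set.indicator_nonneg (fun x _ => F_nonneg σ s x) l)
          hind.summable
    _ = ∏ j ∈ A, a σ s j := hind.tsum_eq

lemma summable_F (σ s : ℝ) (hσ : 1 / 2 < σ) (hs : 1 / 2 < s) : Summable (F σ s) :=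
  summable_of_sum_le (fun l => F_nonneg σ s l) fun u =>
    (sum_le_prod σ s hσ u).trans (prod_a_le σ s hs _)

lemma hasProd_a (σ s : ℝ) (hσ : 1 / 2 < σ) (hs : 1 / 2 < s) :
    HasProd (a σ s) (∑' l, F σ s l) := by
  have hmono : Monotone (fun A : Finset ℕ => ∏ j ∈ A, a σ s j) := by
    intro A B hAB
    classical
    simp only
    rw [← Finset.prod_sdiff hAB]
    have h0 : (0:ℝ) ≤ ∏ j ∈ A, a σ s j :=
      Finset.prod_nonneg fun j _ => le_trans zero_le_one (one_le_a σ s j)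
    have h1 : (1:ℝ) ≤ ∏ j ∈ B \ A, a σ s j := by
      calc (1:ℝ) = ∏ _j ∈ B \ A, (1:ℝ) := Finset.prod_const_one.symm
        _ ≤ _ := Finset.prod_le_prod (fun _ _ => zero_le_one) (fun j _ => one_le_a σ s j)
    exact le_mul_of_one_le_left h0 h1
  have hbdd : BddAbove (Set.range fun A : Finset ℕ => ∏ j ∈ A, a σ s j) := by
    refine ⟨Real.exp (∑' j : ℕ, 2 * ((j : ℝ) + 1) ^ (-(2 * s)) * T σ), ?_⟩
    rintro x ⟨A, rfl⟩
    exact prod_a_le σ s hs A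
  have htend := tendsto_atTop_ciSup hmono hbdd
  have hsup : (⨆ A : Finset ℕ, ∏ j ∈ A, a σ s j) = ∑' l, F σ s l := by
    apply le_antisymm
    · refine ciSup_le fun A => ?_
      have hind := hasSum_indicator σ s hσ A
      rw [← hind.tsum_eq]
      exact Summable.tsum_le_tsum
        (fun l => Set.indicator_le_self' (fun x _ => F_nonneg σ s x) l)
        hind.summable (summable_F σ s hσ hs)
    · exact Summable.tsum_le_of_sum_le (summable_F σ s hσ hs) fun u =>
        (sum_le_prod σ s hσ u).trans (le_ciSup hbdd _)
  rw [← hsup]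
  exact htend

end Stmt19Aux

/- STATEMENT 19 (Section 6.5): for σ > 1/2, s > 1/2,
Σ_{l∈ℤ^∞_*} 2^{J(l)} c_l^{-2} = Π_{j∈ℕ} (1 + 2 j^{-2s} Σ_{k≠0} |2πk|^{-2σ}) < ∞. -/
theorem stmt19 (σ s : ℝ) (hσ : 1 / 2 < σ) (hs : 1 / 2 < s) :
    Summable (fun l : ℕ →₀ ℤ => (2 : ℝ) ^ (Jnum l) * ((cSW σ s l) ^ 2)⁻¹) ∧
    ∑' l : ℕ →₀ ℤ, (2 : ℝ) ^ (Jnum l) * ((cSW σ s l) ^ 2)⁻¹ =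
      ∏' j : ℕ, (1 + 2 * ((j : ℝ) + 1) ^ (-(2 * s)) *
        ∑' k : {k : ℤ // k ≠ 0}, |2 * Real.pi * (k.1 : ℝ)| ^ (-(2 * σ))) := by
  have hF := Stmt19Aux.summable_F σ s hσ hs
  refine ⟨hF.congr fun l => (Stmt19Aux.F_eq σ s l).symm, ?_⟩
  have ht : ∑' l : ℕ →₀ ℤ, (2 : ℝ) ^ (Jnum l) * ((cSW σ s l) ^ 2)⁻¹
      = ∑' l, Stmt19Aux.F σ s l := tsum_congr (Stmt19Aux.F_eq σ s)
  rw [ht, ← (Stmt19Aux.hasProd_a σ s hσ hs).tprod_eq]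
  rfl
end
end
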